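/- The set C is a closed subset of [0,1] of Lebesgue measure zero. -/

import Mathlib

open MeasureTheory Filter ENNReal

/-- `d : ℕ → Bool` is a binary expansion of `x`, where `d i` is the digit at
position `i + 1` (positions are indexed from 1). -/
def IsBinaryExpansion (x : ℝ) (d : ℕ → Bool) : Prop :=
  x = ∑' i : ℕ, if d i then ((2:ℝ) ^ (i + 1))⁻¹ else 0

/-- The set `C` of `x ∈ [0,1]` having a binary expansion in which, for every `n`,
the digit at position `2^(2n)` equals the digit at position `2^(2n+1)`. -/
def Cset : Set ℝ :=
  {x ∈ Set.Icc (0:ℝ) 1 |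
    ∃ d : ℕ → Bool, IsBinaryExpansion x d ∧
      ∀ n : ℕ, d (2 ^ (2 * n) - 1) = d (2 ^ (2 * n + 1) - 1)}



noncomputable def fterm (d : ℕ → Bool) (i : ℕ) : ℝ := if d i then ((2:ℝ) ^ (i + 1))⁻¹ else 0

lemma fterm_nonneg (d : ℕ → Bool) (i : ℕ) : 0 ≤ fterm d i := by
  unfold fterm; split <;> positivity

lemma fterm_le (d : ℕ → Bool) (i : ℕ) : fterm d i ≤ ((2:ℝ) ^ (i+1))⁻¹ := by
  unfold fterm; split
  · exact le_rfl
  · positivity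

lemma summable_geom : Summable (fun i : ℕ => ((2:ℝ) ^ (i+1))⁻¹) := by
  have : Summable (fun i : ℕ => ((2:ℝ)⁻¹) ^ (i+1)) :=
    (summable_geometric_of_lt_one (by norm_num) (by norm_num)).comp_injective (add_left_injective 1)
  simpa [inv_pow] using this

lemma tsum_geom : ∑' i : ℕ, ((2:ℝ) ^ (i+1))⁻¹ = 1 := by
  have h : ∀ i : ℕ, ((2:ℝ) ^ (i+1))⁻¹ = (1/2) * (1/2)^i := by
    intro i; rw [pow_succ, one_div, inv_pow, mul_inv]; ring
  rw [tsum_congr h, tsum_mul_left, tsum_geometric_of_lt_one (by norm_num) (by norm_num)]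
  norm_num

lemma summable_fterm (d : ℕ → Bool) : Summable (fterm d) :=
  Summable.of_nonneg_of_le (fterm_nonneg d) (fterm_le d) summable_geom

noncomputable def fval (d : ℕ → Bool) : ℝ := ∑' i, fterm d i

lemma fval_nonneg (d : ℕ → Bool) : 0 ≤ fval d :=
  tsum_nonneg (fterm_nonneg d)

lemma fval_le_one (d : ℕ → Bool) : fval d ≤ 1 := by
  have := Summable.tsum_le_tsum (fterm_le d) (summable_fterm d) summable_geom
  simpa [fval, tsum_geom] using this

lemma fval_continuous : Continuous fval := by
  apply continuous_tsum (u := fun i : ℕ => ((2:ℝ) ^ (i+1))⁻¹)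
  · intro i
    exact (continuous_of_discreteTopology (f := fun b : Bool => if b then ((2:ℝ)^(i+1))⁻¹ else 0)).comp
      (continuous_apply i)
  · exact summable_geom
  · intro i d
    rw [Real.norm_eq_abs, abs_of_nonneg (fterm_nonneg d i)]
    exact fterm_le d i

def Kset : Set (ℕ → Bool) :=
  {d | ∀ n : ℕ, d (2 ^ (2 * n) - 1) = d (2 ^ (2 * n + 1) - 1)}

lemma Kset_isClosed : IsClosed Kset := by
  have : Kset = ⋂ n : ℕ, {d : ℕ → Bool | d (2 ^ (2 * n) - 1) = d (2 ^ (2 * n + 1) - 1)} := by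
    ext d; simp [Kset, Set.mem_iInter]
  rw [this]
  exact isClosed_iInter fun n =>
    isClosed_eq (continuous_apply _) (continuous_apply _)

lemma Kset_isCompact : IsCompact Kset :=
  Kset_isClosed.isCompact

lemma isBinaryExpansion_iff (x : ℝ) (d : ℕ → Bool) :
    IsBinaryExpansion x d ↔ x = fval d := by
  simp [IsBinaryExpansion, fval, fterm]

lemma Cset_eq_image : Cset = fval '' Kset := by
  ext x
  constructor
  · rintro ⟨hx, d, hd, hcon⟩
    exact ⟨d, hcon, ((isBinaryExpansion_iff x d).1 hd).symm⟩
  · rintro ⟨d, hdK, rfl⟩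
    exact ⟨⟨fval_nonneg d, fval_le_one d⟩, d, (isBinaryExpansion_iff _ d).2 rfl, hdK⟩

lemma Cset_isClosed : IsClosed Cset := by
  rw [Cset_eq_image]
  exact (Kset_isCompact.image fval_continuous).isClosed

lemma pIdx_lt {n N : ℕ} (h : n < N) : 2 ^ (2 * n) - 1 < 2 ^ (2 * N) := by
  have : 2 ^ (2*n) ≤ 2 ^ (2*N) := Nat.pow_le_pow_right (by norm_num) (by omega)
  have h2 : 0 < 2 ^ (2*n) := Nat.pow_pos (by norm_num)
  omega

lemma qIdx_lt {n N : ℕ} (h : n < N) : 2 ^ (2 * n + 1) - 1 < 2 ^ (2 * N) := by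
  have : 2 ^ (2*n+1) ≤ 2 ^ (2*N) := Nat.pow_le_pow_right (by norm_num) (by omega)
  have h2 : 0 < 2 ^ (2*n+1) := Nat.pow_pos (by norm_num)
  omega

lemma pow_ne : ∀ {a b : ℕ}, 2 ^ (2*a) - 1 ≠ 2 ^ (2*b+1) - 1 := by
  intro a b h
  have h1 : 0 < 2 ^ (2*a) := Nat.pow_pos (by norm_num)
  have h2 : 0 < 2 ^ (2*b+1) := Nat.pow_pos (by norm_num)
  have : (2:ℕ) ^ (2*a) = 2 ^ (2*b+1) := by omega
  have := Nat.pow_right_injective (le_refl 2) this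
  omega

lemma qIdx_inj : ∀ {a b : ℕ}, 2 ^ (2*a+1) - 1 = 2 ^ (2*b+1) - 1 → a = b := by
  intro a b h
  have h1 : 0 < 2 ^ (2*a+1) := Nat.pow_pos (by norm_num)
  have h2 : 0 < 2 ^ (2*b+1) := Nat.pow_pos (by norm_num)
  have : (2:ℕ) ^ (2*a+1) = 2 ^ (2*b+1) := by omega
  have := Nat.pow_right_injective (le_refl 2) this
  omega

/-- The constrained prefix functions. -/
def SN (N : ℕ) : Set (Fin (2 ^ (2*N)) → Bool) :=
  {v | ∀ n : ℕ, ∀ h : n < N, v ⟨2 ^ (2*n) - 1, pIdx_lt h⟩ = v ⟨2 ^ (2*n+1) - 1, qIdx_lt h⟩}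

noncomputable def sval {M : ℕ} (v : Fin M → Bool) : ℝ :=
  ∑ i : Fin M, if v i then ((2:ℝ) ^ ((i:ℕ) + 1))⁻¹ else 0

def Qf (N : ℕ) : Finset (Fin (2 ^ (2*N))) :=
  (Finset.range N).attach.image
    (fun (n : {x // x ∈ Finset.range N}) =>
      ⟨2 ^ (2*(n:ℕ)+1) - 1, qIdx_lt (Finset.mem_range.mp n.2)⟩)

lemma Qf_card (N : ℕ) : (Qf N).card = N := by
  rw [Qf, Finset.card_image_of_injOn, Finset.card_attach, Finset.card_range]
  intro a _ b _ h
  rw [Fin.mk.injEq] at h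
  exact Subtype.ext (qIdx_inj h)

lemma mem_Qf {N : ℕ} {i : Fin (2 ^ (2*N))} (h : i ∈ Qf N) :
    ∃ n : ℕ, ∃ hn : n < N, (i : ℕ) = 2 ^ (2*n+1) - 1 := by
  rw [Qf, Finset.mem_image] at h
  obtain ⟨n, _, rfl⟩ := h
  exact ⟨n, Finset.mem_range.mp n.2, rfl⟩

lemma pFin_not_mem_Qf {N n : ℕ} (hn : n < N) :
    (⟨2 ^ (2*n) - 1, pIdx_lt hn⟩ : Fin (2 ^ (2*N))) ∉ Qf N := by
  intro h
  obtain ⟨m, hm, hciq⟩ := mem_Qf h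
  exact pow_ne hciq

instance (N : ℕ) : Fintype (SN N) := by
  unfold SN; infer_instance

lemma SN_card (N : ℕ) : Fintype.card (SN N) ≤ 2 ^ (2 ^ (2*N) - N) := by
  classical
  set M := 2 ^ (2*N)
  have hinj : Function.Injective
      (fun (v : SN N) => (fun i : {i : Fin M // i ∉ Qf N} => v.1 i.1)) := by
    rintro ⟨v, hv⟩ ⟨w, hw⟩ h
    simp only [Subtype.mk.injEq]
    funext i
    by_cases hi : i ∈ Qf N
    · obtain ⟨n, hn, hiq⟩ := mem_Qf hi
      have hieq : i = ⟨2 ^ (2*n+1) - 1, qIdx_lt hn⟩ := Fin.ext hiq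
      have h1 := hv n hn
      have h2 := hw n hn
      have h3 : v ⟨2 ^ (2*n) - 1, pIdx_lt hn⟩ = w ⟨2 ^ (2*n) - 1, pIdx_lt hn⟩ :=
        congrFun h ⟨_, pFin_not_mem_Qf hn⟩
      rw [hieq, ← h1, ← h2, h3]
    · exact congrFun h ⟨i, hi⟩
  calc Fintype.card (SN N) ≤ Fintype.card ({i : Fin M // i ∉ Qf N} → Bool) :=
        Fintype.card_le_of_injective _ hinj
    _ = 2 ^ (Fintype.card {i : Fin M // i ∉ Qf N}) := by
        rw [Fintype.card_fun]; rfl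
    _ = 2 ^ (M - N) := by
        congr 1
        rw [Fintype.card_subtype_compl, Fintype.card_coe, Qf_card, Fintype.card_fin]

lemma tail_bounds (d : ℕ → Bool) (M : ℕ) :
    0 ≤ ∑' i, fterm d (i + M) ∧ ∑' i, fterm d (i + M) ≤ ((2:ℝ) ^ M)⁻¹ := by
  have hsum : Summable (fun i => fterm d (i + M)) :=
    (summable_nat_add_iff M).mpr (summable_fterm d)
  constructor
  · exact tsum_nonneg (fun i => fterm_nonneg d _)
  · have hge : Summable (fun i : ℕ => ((2:ℝ)^M)⁻¹ * ((2:ℝ) ^ (i+1))⁻¹) :=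
      summable_geom.mul_left _
    have hle : ∀ i : ℕ, fterm d (i + M) ≤ ((2:ℝ)^M)⁻¹ * ((2:ℝ) ^ (i+1))⁻¹ := by
      intro i
      have := fterm_le d (i + M)
      have heq : ((2:ℝ) ^ (i + M + 1))⁻¹ = ((2:ℝ)^M)⁻¹ * ((2:ℝ) ^ (i+1))⁻¹ := by
        rw [← mul_inv, ← pow_add]; ring_nf
      rwa [heq] at this
    calc ∑' i, fterm d (i + M) ≤ ∑' i : ℕ, ((2:ℝ)^M)⁻¹ * ((2:ℝ) ^ (i+1))⁻¹ :=
          Summable.tsum_le_tsum hle hsum hge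
      _ = ((2:ℝ)^M)⁻¹ := by rw [tsum_mul_left, tsum_geom, mul_one]

lemma cover (N : ℕ) :
    Cset ⊆ ⋃ v : SN N, Set.Icc (sval v.1) (sval v.1 + ((2:ℝ) ^ (2 ^ (2*N)))⁻¹) := by
  rw [Cset_eq_image]
  rintro x ⟨d, hdK, rfl⟩
  set M := 2 ^ (2*N) with hM
  have hvmem : (fun i : Fin M => d i) ∈ SN N := by
    intro n hn
    exact hdK n
  refine Set.mem_iUnion.mpr ⟨⟨_, hvmem⟩, ?_⟩
  have hsplit : (∑ i ∈ Finset.range M, fterm d i) + ∑' i, fterm d (i + M) = fval d :=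
    (summable_fterm d).sum_add_tsum_nat_add M
  have hsval : sval (fun i : Fin M => d i) = ∑ i ∈ Finset.range M, fterm d i := by
    rw [sval, ← Fin.sum_univ_eq_sum_range (fun i => fterm d i) M]
    rfl
  obtain ⟨h0, h1⟩ := tail_bounds d M
  constructor
  · rw [hsval, ← hsplit]; linarith
  · rw [hsval, ← hsplit]; linarith

lemma vol_le (N : ℕ) : volume Cset ≤ ((2:ℝ≥0∞) ^ N)⁻¹ := by
  set M := 2 ^ (2*N) with hM
  have hNM : N ≤ M := le_of_lt (lt_of_lt_of_le (Nat.lt_two_pow_self (n := N))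
    (Nat.pow_le_pow_right (by norm_num) (by omega)))
  have hvol : ∀ v : SN N, volume (Set.Icc (sval v.1) (sval v.1 + ((2:ℝ) ^ M)⁻¹))
      = ((2:ℝ≥0∞) ^ M)⁻¹ := by
    intro v
    rw [Real.volume_Icc, add_sub_cancel_left, ENNReal.ofReal_inv_of_pos (by positivity),
      ENNReal.ofReal_pow (by norm_num)]
    norm_num
  calc volume Cset ≤ volume (⋃ v : SN N, Set.Icc (sval v.1) (sval v.1 + ((2:ℝ) ^ M)⁻¹)) :=
        measure_mono (cover N)
    _ ≤ ∑ v : SN N, volume (Set.Icc (sval v.1) (sval v.1 + ((2:ℝ) ^ M)⁻¹)) :=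
        measure_iUnion_fintype_le _ _
    _ = (Fintype.card (SN N)) * ((2:ℝ≥0∞) ^ M)⁻¹ := by
        rw [Finset.sum_congr rfl (fun v _ => hvol v), Finset.sum_const, Finset.card_univ,
          nsmul_eq_mul]
    _ ≤ (2:ℝ≥0∞) ^ (M - N) * ((2:ℝ≥0∞) ^ M)⁻¹ := by
        gcongr
        have := SN_card N
        calc (Fintype.card (SN N) : ℝ≥0∞) ≤ ((2 ^ (M - N) : ℕ) : ℝ≥0∞) := by
              exact_mod_cast this
          _ = (2:ℝ≥0∞) ^ (M - N) := by push_cast; ring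
    _ = ((2:ℝ≥0∞) ^ N)⁻¹ := by
        have h2 : (2:ℝ≥0∞) ^ M = 2 ^ (M - N) * 2 ^ N := by
          rw [← pow_add, Nat.sub_add_cancel hNM]
        rw [h2, ENNReal.mul_inv (Or.inl (by positivity)) (Or.inl (by norm_num)),
          ← mul_assoc, ENNReal.mul_inv_cancel (by positivity) (by norm_num), one_mul]


/-- The set `C` is a closed subset of `[0,1]` of Lebesgue measure zero. -/
theorem Cset_closed_subset_null :
    Cset ⊆ Set.Icc (0:ℝ) 1 ∧ IsClosed Cset ∧ volume Cset = 0 := by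
  refine ⟨fun x hx => hx.1, Cset_isClosed, ?_⟩
  have htend : Tendsto (fun N : ℕ => ((2:ℝ≥0∞) ^ N)⁻¹) atTop (nhds 0) := by
    have heq : ∀ n : ℕ, ((2:ℝ≥0∞) ^ n)⁻¹ = ((2:ℝ≥0∞)⁻¹) ^ n := fun n =>
      ENNReal.inv_pow
    simp_rw [heq]
    exact ENNReal.tendsto_pow_atTop_nhds_zero_of_lt_one
      (by simp [ENNReal.inv_lt_one])
  have := ge_of_tendsto htend (Eventually.of_forall vol_le)
  exact le_antisymm this zero_le
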